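/- Let α be an exponent sequence, let (b_{n,k}) be a Köthe matrix, and let θ : ℕ → ℂ belong to the dual of Λ_1(α), i.e., there exist a positive integer m₀ and C₀ > 0 with |θ_n| ≤ C₀ e^{-α_n/m₀} for all n. Assume that for every positive integer m the sequence (e^{-α_n/m})_n belongs to K(b_{n,k}), i.e., ∑_{n=0}^∞ e^{-α_n/m} b_{n,k} < ∞ for all k ∈ ℕ and positive integers m. Then there exists a positive integer m (one may take m = 2m₀) such that for every k ∈ ℕ there is C > 0 with ∑_{j=0}^∞ |θ_{j+n}| · b_{j,k} ≤ C · e^{-α_n/m} for all n ∈ ℕ (i.e., the Hankel operator H_θ : Λ_1(α) → K(b_{n,k}) is continuous and satisfies the compactness condition, the index m being independent of k). -/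

import Mathlib

/-- Let `α` be an exponent sequence and `θ` in the dual of `Λ_1(α)`. If
`(e^{-α_n/m})_n ∈ K(b)` for every positive integer `m`, then the Hankel operator
`H_θ : Λ_1(α) → K(b)` is continuous and satisfies the compactness condition (the index
`m` is independent of `k`). -/
theorem hankel_from_finite_type_compact
    (α : ℕ → ℝ) (b : ℕ → ℕ → ℝ) (θ : ℕ → ℂ)
    (hα_nonneg : ∀ n, 0 ≤ α n) (hα_mono : Monotone α)
    (hα_tendsto : Filter.Tendsto α Filter.atTop Filter.atTop)
    (hb_nonneg : ∀ n k, 0 ≤ b n k) (hb_mono : ∀ n k, b n k ≤ b n (k + 1))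
    (hb_pos : ∀ n, ∃ k, 0 < b n k)
    (hθ : ∃ m₀ : ℕ, 0 < m₀ ∧ ∃ C₀ : ℝ, 0 < C₀ ∧
      ∀ n : ℕ, ‖θ n‖ ≤ C₀ * Real.exp (-α n / (m₀ : ℝ)))
    (hcond : ∀ m : ℕ, 0 < m → ∀ k : ℕ,
      Summable fun n : ℕ => Real.exp (-α n / (m : ℝ)) * b n k) :
    ∃ m : ℕ, 0 < m ∧ ∀ k : ℕ, ∃ C : ℝ, 0 < C ∧
      ∀ n : ℕ, (∑' j : ℕ, ‖θ (j + n)‖ * b j k) ≤ C * Real.exp (-α n / (m : ℝ)) := by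

  obtain ⟨m₀, hm₀, C₀, hC₀, hθb⟩ := hθ
  have hm : (0:ℝ) < (m₀ : ℝ) := by exact_mod_cast hm₀
  refine ⟨2 * m₀, Nat.mul_pos two_pos hm₀, fun k => ?_⟩
  have hsum : Summable fun j : ℕ => Real.exp (-α j / ((2 * m₀ : ℕ) : ℝ)) * b j k :=
    hcond (2 * m₀) (Nat.mul_pos two_pos hm₀) k
  have hcast : ((2 * m₀ : ℕ) : ℝ) = 2 * (m₀ : ℝ) := by push_cast; ring
  rw [hcast] at hsum
  set S := ∑' j : ℕ, Real.exp (-α j / (2 * (m₀ : ℝ))) * b j k with hSdef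
  have hS0 : 0 ≤ S := tsum_nonneg fun j => mul_nonneg (Real.exp_pos _).le (hb_nonneg j k)
  refine ⟨C₀ * (S + 1), by positivity, fun n => ?_⟩
  have key : ∀ j : ℕ, ‖θ (j + n)‖ * b j k ≤
      C₀ * Real.exp (-α n / (2 * (m₀ : ℝ))) * (Real.exp (-α j / (2 * (m₀ : ℝ))) * b j k) := by
    intro j
    have h1 : ‖θ (j + n)‖ ≤ C₀ * Real.exp (-α (j + n) / (m₀ : ℝ)) := hθb _
    have h2 : Real.exp (-α (j + n) / (m₀ : ℝ)) ≤
        Real.exp (-α n / (2 * (m₀ : ℝ))) * Real.exp (-α j / (2 * (m₀ : ℝ))) := by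
      rw [← Real.exp_add]
      apply Real.exp_le_exp.mpr
      have han : α n ≤ α (j + n) := hα_mono (Nat.le_add_left n j)
      have haj : α j ≤ α (j + n) := hα_mono (Nat.le_add_right j n)
      rw [← add_div, div_le_div_iff₀ hm (by positivity)]
      nlinarith
    have hb' := hb_nonneg j k
    calc ‖θ (j + n)‖ * b j k ≤ (C₀ * Real.exp (-α (j + n) / (m₀ : ℝ))) * b j k := by
          apply mul_le_mul_of_nonneg_right h1 hb'
      _ ≤ (C₀ * (Real.exp (-α n / (2 * (m₀ : ℝ))) * Real.exp (-α j / (2 * (m₀ : ℝ))))) * b j k := by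
          apply mul_le_mul_of_nonneg_right _ hb'
          exact mul_le_mul_of_nonneg_left h2 hC₀.le
      _ = C₀ * Real.exp (-α n / (2 * (m₀ : ℝ))) * (Real.exp (-α j / (2 * (m₀ : ℝ))) * b j k) := by
          ring
  have hsum2 : Summable fun j : ℕ =>
      C₀ * Real.exp (-α n / (2 * (m₀ : ℝ))) * (Real.exp (-α j / (2 * (m₀ : ℝ))) * b j k) :=
    hsum.mul_left _
  have hsum1 : Summable fun j : ℕ => ‖θ (j + n)‖ * b j k :=
    Summable.of_nonneg_of_le (fun j => mul_nonneg (norm_nonneg _) (hb_nonneg j k)) key hsum2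
  calc (∑' j : ℕ, ‖θ (j + n)‖ * b j k)
      ≤ ∑' j : ℕ, C₀ * Real.exp (-α n / (2 * (m₀ : ℝ))) * (Real.exp (-α j / (2 * (m₀ : ℝ))) * b j k) :=
        Summable.tsum_le_tsum key hsum1 hsum2
    _ = C₀ * Real.exp (-α n / (2 * (m₀ : ℝ))) * S := tsum_mul_left
    _ ≤ C₀ * (S + 1) * Real.exp (-α n / ((2 * m₀ : ℕ) : ℝ)) := by
        rw [hcast]
        have he : (0:ℝ) < Real.exp (-α n / (2 * (m₀ : ℝ))) := Real.exp_pos _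
        nlinarith
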